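/- Fix a real number q > 1 and denote by (α_i) the quasi-greedy expansion of 1 in base q with unbounded digits. The map x ↦ (a_i), where (a_i) denotes the quasi-greedy expansion of x, is a strictly increasing one-to-one correspondence between the interval (0, ∞) and the set of sequences (a_i) of nonnegative integers having infinitely many nonzero terms and satisfying a_{n+1}a_{n+2}... ≤ α_1α_2... (lexicographically) for all n ≥ 1. -/

import Mathlib

/-- Strict lexicographic order on digit sequences (indexed from 0). -/
def LexLt (a b : ℕ → ℕ) : Prop :=
  ∃ n, (∀ k, k < n → a k = b k) ∧ a n < b n

/-- Non-strict lexicographic order on digit sequences. -/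
def LexLe (a b : ℕ → ℕ) : Prop :=
  LexLt a b ∨ a = b

/-- The next quasi-greedy digit with unbounded digits: the largest nonnegative integer `m`
with `s + m / q ^ (n+1) < x`, where `s` is the value of the previously chosen digits. -/
noncomputable def qgDigitU (q x s : ℝ) (n : ℕ) : ℕ :=
  sSup {m : ℕ | s + (m : ℝ) / q ^ (n + 1) < x}

/-- Partial sums of the quasi-greedy expansion of `x` in base `q` with unbounded digits. -/
noncomputable def qgSumU (q x : ℝ) : ℕ → ℝ
  | 0 => 0
  | n + 1 => qgSumU q x n + (qgDigitU q x (qgSumU q x n) n : ℝ) / q ^ (n + 1)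

/-- `quasiGreedyU q x n` is the `(n+1)`-st digit (indexing from 0) of the quasi-greedy
expansion of `x` in base `q` with unbounded digits: recursively, it is the largest
nonnegative integer `a_n` with `a_1/q + ⋯ + a_n/q^n < x`. -/
noncomputable def quasiGreedyU (q x : ℝ) (n : ℕ) : ℕ :=
  qgDigitU q x (qgSumU q x n) n

section
variable {q x x' s : ℝ} (hq : 1 < q)
include hq

lemma QGU.qpos (n : ℕ) : (0:ℝ) < q ^ n := pow_pos (lt_trans one_pos hq) n

lemma QGU.digit_bdd (x s : ℝ) (n : ℕ) : BddAbove {m : ℕ | s + (m : ℝ) / q ^ (n + 1) < x} := by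
  rcases exists_nat_gt ((x - s) * q ^ (n+1)) with ⟨N, hN⟩
  refine ⟨N, fun m hm => ?_⟩
  have hm' : s + (m : ℝ) / q ^ (n + 1) < x := hm
  have h1 : (m:ℝ)/q^(n+1) < x - s := by linarith
  have h2 : (m:ℝ) < (x-s)*q^(n+1) := (div_lt_iff₀ (QGU.qpos hq (n+1))).mp h1
  exact Nat.cast_le.mp (le_of_lt (lt_trans h2 hN))

lemma QGU.digit_lt (hx : s < x) (n : ℕ) :
    s + (qgDigitU q x s n : ℝ) / q ^ (n + 1) < x := by
  have h0 : (0:ℕ) ∈ {m : ℕ | s + (m : ℝ) / q ^ (n + 1) < x} := by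
    simp [Set.mem_setOf_eq, hx]
  exact Nat.sSup_mem ⟨0, h0⟩ (QGU.digit_bdd hq x s n)

lemma QGU.digit_ge (hx : s < x) (n : ℕ) :
    x ≤ s + ((qgDigitU q x s n : ℝ) + 1) / q ^ (n + 1) := by
  by_contra h
  push_neg at h
  have hmem : qgDigitU q x s n + 1 ∈ {m : ℕ | s + (m : ℝ) / q ^ (n + 1) < x} := by
    simpa [Set.mem_setOf_eq] using h
  have h2 : qgDigitU q x s n + 1 ≤ qgDigitU q x s n := le_csSup (QGU.digit_bdd hq x s n) hmem
  omega

lemma QGU.sum_lt (hx : 0 < x) (n : ℕ) : qgSumU q x n < x := by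
  induction n with
  | zero => simpa [qgSumU]
  | succ n ih => exact QGU.digit_lt hq ih n

lemma QGU.sum_ge (hx : 0 < x) (n : ℕ) : x ≤ qgSumU q x (n+1) + 1 / q ^ (n + 1) := by
  have := QGU.digit_ge hq (QGU.sum_lt hq hx n) n
  simp only [qgSumU]
  rw [add_div] at this
  linarith

lemma QGU.sum_eq_partial (n : ℕ) :
    qgSumU q x n = ∑ i ∈ Finset.range n, (quasiGreedyU q x i : ℝ) / q ^ (i + 1) := by
  induction n with
  | zero => simp [qgSumU]
  | succ n ih => rw [Finset.sum_range_succ, ← ih]; rfl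

lemma QGU.small_pow {ε : ℝ} (hε : 0 < ε) : ∃ n : ℕ, 1 / q ^ (n+1) < ε := by
  obtain ⟨n, hn⟩ := exists_pow_lt_of_lt_one hε ((div_lt_one (lt_trans one_pos hq)).mpr hq)
  refine ⟨n, lt_of_le_of_lt ?_ (by rwa [div_pow, one_pow] at hn)⟩
  exact one_div_le_one_div_of_le (QGU.qpos hq n) (pow_le_pow_right₀ (le_of_lt hq) (Nat.le_succ n))

end

section
variable {q x x' s : ℝ} (hq : 1 < q)

lemma QGU.sum_split (a : ℕ → ℕ) (N t : ℕ) :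
    ∑ i ∈ Finset.range (N+1+t), (a i:ℝ)/q^(i+1)
      = (∑ i ∈ Finset.range (N+1), (a i:ℝ)/q^(i+1))
        + (1/q^(N+1)) * ∑ i ∈ Finset.range t, (a (N+1+i):ℝ)/q^(i+1) := by
  rw [Finset.sum_range_add, Finset.mul_sum]
  congr 1
  refine Finset.sum_congr rfl fun i _ => ?_
  rw [show N+1+i+1 = (N+1)+(i+1) from by ring, pow_add]
  ring

include hq

lemma QGU.sum_stable (hx : 0 < x) {N : ℕ} (hN : ∀ n, N ≤ n → quasiGreedyU q x n = 0) :
    ∀ n, N ≤ n → qgSumU q x n = qgSumU q x N := by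
  intro n hn
  induction n with
  | zero => simp_all
  | succ n ih =>
    rcases Nat.lt_or_ge N (n+1) with h | h
    · have hNn : N ≤ n := by omega
      have hc : (quasiGreedyU q x n : ℝ) = 0 := by rw [hN n hNn]; simp
      show qgSumU q x n + (quasiGreedyU q x n : ℝ)/q^(n+1) = _
      rw [hc, ih hNn]; ring
    · have : N = n + 1 := by omega
      rw [this]

lemma QGU.infinite_nonzero (hx : 0 < x) : {n | quasiGreedyU q x n ≠ 0}.Infinite := by
  by_contra h
  rw [Set.not_infinite] at h
  obtain ⟨N, hN⟩ := h.bddAbove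
  have hz : ∀ n, N+1 ≤ n → quasiGreedyU q x n = 0 := by
    intro n hn
    by_contra hne
    have := hN hne
    omega
  have hst := QGU.sum_stable hq hx hz
  have hlt := QGU.sum_lt hq hx (N+1)
  obtain ⟨n, hn⟩ := QGU.small_pow hq (sub_pos.mpr hlt)
  have h1 := QGU.sum_ge hq hx (max n (N+1))
  have h2 : qgSumU q x (max n (N+1) + 1) = qgSumU q x (N+1) := hst _ (by omega)
  have h3 : 1/q^(max n (N+1)+1) ≤ 1/q^(n+1) :=
    one_div_le_one_div_of_le (QGU.qpos hq _) (pow_le_pow_right₀ hq.le (by omega))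
  linarith

lemma QGU.digit_eq {n aN : ℕ} (hmem : s + (aN:ℝ)/q^(n+1) < x)
    (hub : x ≤ s + ((aN:ℝ)+1)/q^(n+1)) : qgDigitU q x s n = aN := by
  refine le_antisymm (csSup_le ⟨aN, hmem⟩ ?_) (le_csSup (QGU.digit_bdd hq x s n) hmem)
  intro m hm
  by_contra hc
  push_neg at hc
  have h1 : (aN:ℝ) + 1 ≤ m := by exact_mod_cast hc
  have hm' : s + (m:ℝ)/q^(n+1) < x := hm
  have h2 : ((aN:ℝ)+1)/q^(n+1) ≤ (m:ℝ)/q^(n+1) :=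
    (div_le_div_iff_of_pos_right (QGU.qpos hq (n+1))).mpr h1
  linarith

lemma QGU.expansion_eq (a : ℕ → ℕ)
    (h1 : ∀ n, (∑ i ∈ Finset.range n, (a i:ℝ)/q^(i+1)) < x)
    (h2 : ∀ n, x ≤ (∑ i ∈ Finset.range (n+1), (a i:ℝ)/q^(i+1)) + 1/q^(n+1)) :
    quasiGreedyU q x = a := by
  have key : ∀ n, qgSumU q x n = ∑ i ∈ Finset.range n, (a i:ℝ)/q^(i+1) := by
    intro n
    induction n with
    | zero => simp [qgSumU]
    | succ n ih =>
      have hd : qgDigitU q x (qgSumU q x n) n = a n := by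
        rw [ih]
        refine QGU.digit_eq hq ?_ ?_
        · have := h1 (n+1)
          rwa [Finset.sum_range_succ] at this
        · have := h2 n
          rw [Finset.sum_range_succ] at this
          rw [add_div]
          linarith
      show qgSumU q x n + (qgDigitU q x (qgSumU q x n) n : ℝ)/q^(n+1) = _
      rw [hd, ih, Finset.sum_range_succ]
  funext n
  show qgDigitU q x (qgSumU q x n) n = a n
  rw [key n]
  refine QGU.digit_eq hq ?_ ?_
  · have := h1 (n+1); rwa [Finset.sum_range_succ] at this
  · have := h2 n
    rw [Finset.sum_range_succ] at this
    rw [add_div]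
    linarith
end

section
variable {q x x' : ℝ} (hq : 1 < q)
include hq

lemma QGU.tail_sums (a : ℕ → ℕ)
    (hlex : ∀ k, LexLe (fun i => a (k+1+i)) (quasiGreedyU q 1)) :
    ∀ n k, (∑ i ∈ Finset.range n, (a (k+1+i):ℝ)/q^(i+1)) ≤ 1 := by
  intro n
  induction n using Nat.strong_induction_on with
  | _ n IH =>
  intro k
  have hpartial : ∀ m, (∀ i, i < m → a (k+1+i) = quasiGreedyU q 1 i) →
      (∑ i ∈ Finset.range m, (a (k+1+i):ℝ)/q^(i+1)) = qgSumU q 1 m := by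
    intro m hm
    rw [QGU.sum_eq_partial hq]
    exact Finset.sum_congr rfl (fun i hi => by rw [hm i (Finset.mem_range.mp hi)])
  rcases hlex k with hlt | heq
  · obtain ⟨m, hagree, hm⟩ := hlt
    rcases le_or_gt n m with h | h
    · rw [hpartial n (fun i hi => hagree i (by omega))]
      exact (QGU.sum_lt hq one_pos n).le
    · obtain ⟨t, rfl⟩ : ∃ t, n = (m+1) + t := ⟨n - (m+1), by omega⟩
      rw [QGU.sum_split]
      have e1 : (∑ i ∈ Finset.range (m+1), (a (k+1+i):ℝ)/q^(i+1))
          ≤ qgSumU q 1 (m+1) - 1/q^(m+1) := by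
        rw [Finset.sum_range_succ, hpartial m hagree]
        have hs1 : qgSumU q 1 (m+1) = qgSumU q 1 m + (quasiGreedyU q 1 m : ℝ)/q^(m+1) := rfl
        have hc : (a (k+1+m):ℝ) + 1 ≤ (quasiGreedyU q 1 m : ℝ) := by exact_mod_cast hm
        have := (div_le_div_iff_of_pos_right (QGU.qpos hq (m+1))).mpr hc
        rw [add_div] at this
        linarith
      have e2 : (∑ i ∈ Finset.range t, (a (k+1+(m+1+i)):ℝ)/q^(i+1)) ≤ 1 := by
        have := IH t (by omega) (k+m+1)
        calc (∑ i ∈ Finset.range t, (a (k+1+(m+1+i)):ℝ)/q^(i+1))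
            = ∑ i ∈ Finset.range t, (a ((k+m+1)+1+i):ℝ)/q^(i+1) :=
              Finset.sum_congr rfl (fun i _ => by rw [show k+1+(m+1+i) = (k+m+1)+1+i from by ring])
          _ ≤ 1 := this
      have h3 : (0:ℝ) < 1/q^(m+1) := by positivity
      have h5 : (1/q^(m+1)) * (∑ i ∈ Finset.range t, (a (k+1+(m+1+i)):ℝ)/q^(i+1)) ≤ (1/q^(m+1)) * 1 :=
        mul_le_mul_of_nonneg_left e2 h3.le
      have h6 := QGU.sum_lt hq one_pos (m+1)
      linarith
  · have e : ∀ i, a (k+1+i) = quasiGreedyU q 1 i := fun i => congrFun heq i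
    rw [hpartial n (fun i _ => e i)]
    exact (QGU.sum_lt hq one_pos n).le
end

lemma QGU.tail_infinite {a : ℕ → ℕ} (h : {n | a n ≠ 0}.Infinite) (N : ℕ) :
    {i | a (N + i) ≠ 0}.Infinite := by
  have h1 : ({n | a n ≠ 0} ∩ {n | N ≤ n}).Infinite := by
    have := h.diff (Set.finite_Iio N)
    refine this.mono ?_
    intro n hn
    simp only [Set.mem_diff, Set.mem_Iio, not_lt] at hn
    exact ⟨hn.1, hn.2⟩
  have h2 : ((fun i => N + i) ⁻¹' ({n | a n ≠ 0} ∩ {n | N ≤ n})).Infinite := by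
    refine h1.preimage ?_
    intro n hn
    have h2 : N ≤ n := hn.2
    refine ⟨n - N, ?_⟩
    show N + (n - N) = n
    omega
  exact h2.mono (fun i hi => hi.1)

section
variable {q x x' : ℝ} (hq : 1 < q)

lemma QGU.sum_eq_of_digits_eq {n : ℕ}
    (h : ∀ k, k < n → quasiGreedyU q x k = quasiGreedyU q x' k) :
    qgSumU q x n = qgSumU q x' n := by
  induction n with
  | zero => rfl
  | succ n ih =>
    have e := ih (fun k hk => h k (by omega))
    show qgSumU q x n + (quasiGreedyU q x n : ℝ)/q^(n+1)
        = qgSumU q x' n + (quasiGreedyU q x' n : ℝ)/q^(n+1)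
    rw [e, h n (by omega)]

include hq

lemma QGU.lex_le_alpha (b : ℕ → ℕ) (hb : {n | b n ≠ 0}.Infinite)
    (hsum : ∀ n, (∑ i ∈ Finset.range n, (b i:ℝ)/q^(i+1)) ≤ 1) :
    LexLe b (quasiGreedyU q 1) := by
  by_cases hbe : b = quasiGreedyU q 1
  · exact Or.inr hbe
  left
  have hne : ∃ n, b n ≠ quasiGreedyU q 1 n := by
    by_contra h; push_neg at h; exact hbe (funext h)
  classical
  have hn : b (Nat.find hne) ≠ quasiGreedyU q 1 (Nat.find hne) := Nat.find_spec hne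
  set n := Nat.find hne with hns
  have hagree : ∀ k, k < n → b k = quasiGreedyU q 1 k :=
    fun k hk => not_not.mp (Nat.find_min hne hk)
  rcases lt_or_gt_of_ne hn with h | h
  · exact ⟨n, hagree, h⟩
  · exfalso
    have e1 : ∑ i ∈ Finset.range n, (b i:ℝ)/q^(i+1) = qgSumU q 1 n := by
      rw [QGU.sum_eq_partial hq]
      exact Finset.sum_congr rfl (fun i hi => by rw [hagree i (Finset.mem_range.mp hi)])
    have hS : (1:ℝ) ≤ ∑ i ∈ Finset.range (n+1), (b i:ℝ)/q^(i+1) := by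
      rw [Finset.sum_range_succ, e1]
      have hge : (1:ℝ) ≤ qgSumU q 1 n + ((quasiGreedyU q 1 n : ℝ)+1)/q^(n+1) :=
        QGU.digit_ge hq (QGU.sum_lt hq one_pos n) n
      have hcast : (quasiGreedyU q 1 n : ℝ) + 1 ≤ (b n:ℝ) := by exact_mod_cast h
      have := (div_le_div_iff_of_pos_right (QGU.qpos hq (n+1))).mpr hcast
      exact le_trans hge (by linarith)
    obtain ⟨m, hmem, hmlt⟩ := hb.exists_gt n
    have hmono : ∑ i ∈ Finset.range (n+1), (b i:ℝ)/q^(i+1)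
        ≤ ∑ i ∈ Finset.range m, (b i:ℝ)/q^(i+1) := by
      refine Finset.sum_le_sum_of_subset_of_nonneg ?_ ?_
      · exact Finset.range_subset_range.mpr (by omega)
      · intro i _ _
        exact div_nonneg (Nat.cast_nonneg _) (QGU.qpos hq (i+1)).le
    have hpos : (0:ℝ) < (b m:ℝ)/q^(m+1) := by
      have : (1:ℝ) ≤ (b m:ℝ) := by
        have : b m ≠ 0 := hmem
        exact_mod_cast Nat.one_le_iff_ne_zero.mpr this
      positivity
    have := hsum (m+1)
    rw [Finset.sum_range_succ] at this
    linarith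

lemma QGU.lexlt_of_lt (hx : 0 < x) (hxx : x < x') :
    LexLt (quasiGreedyU q x) (quasiGreedyU q x') := by
  have hx' : 0 < x' := hx.trans hxx
  have hne : ∃ n, quasiGreedyU q x n ≠ quasiGreedyU q x' n := by
    by_contra hall; push_neg at hall
    obtain ⟨n, hn⟩ := QGU.small_pow hq (sub_pos.mpr hxx)
    have e : qgSumU q x (n+1) = qgSumU q x' (n+1) :=
      QGU.sum_eq_of_digits_eq (fun k _ => hall k)
    have h1 := QGU.sum_ge hq hx' n
    have h2 := QGU.sum_lt hq hx (n+1)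
    rw [← e] at h1
    linarith
  classical
  have hnd : quasiGreedyU q x (Nat.find hne) ≠ quasiGreedyU q x' (Nat.find hne) :=
    Nat.find_spec hne
  set n := Nat.find hne with hns
  have hagree : ∀ k, k < n → quasiGreedyU q x k = quasiGreedyU q x' k :=
    fun k hk => not_not.mp (Nat.find_min hne hk)
  refine ⟨n, hagree, ?_⟩
  have e : qgSumU q x n = qgSumU q x' n := QGU.sum_eq_of_digits_eq hagree
  have hsub : {m : ℕ | qgSumU q x n + (m:ℝ)/q^(n+1) < x}
      ⊆ {m : ℕ | qgSumU q x' n + (m:ℝ)/q^(n+1) < x'} := by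
    intro m hm
    simp only [Set.mem_setOf_eq] at *
    rw [← e]
    linarith
  have hle : quasiGreedyU q x n ≤ quasiGreedyU q x' n := by
    show qgDigitU q x (qgSumU q x n) n ≤ qgDigitU q x' (qgSumU q x' n) n
    exact csSup_le_csSup (QGU.digit_bdd hq x' _ n)
      ⟨0, by simpa using QGU.sum_lt hq hx n⟩ hsub
  exact lt_of_le_of_ne hle hnd

end

section
variable {q x : ℝ} (hq : 1 < q)
include hq

lemma QGU.tail_sum_le_one (hx : 0 < x) (n m : ℕ) :
    (∑ i ∈ Finset.range m, (quasiGreedyU q x (n+1+i):ℝ)/q^(i+1)) ≤ 1 := by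
  have hsplit := QGU.sum_split (q:=q) (quasiGreedyU q x) n m
  rw [← QGU.sum_eq_partial hq, ← QGU.sum_eq_partial hq] at hsplit
  have h1 := QGU.sum_lt hq hx (n+1+m)
  have h2 := QGU.sum_ge hq hx n
  have hq1 : (0:ℝ) < 1/q^(n+1) := by
    have := QGU.qpos hq (n+1); positivity
  have key : (1/q^(n+1)) * (∑ i ∈ Finset.range m, (quasiGreedyU q x (n+1+i):ℝ)/q^(i+1))
      ≤ (1/q^(n+1)) * 1 := by
    rw [mul_one]
    linarith
  exact (mul_le_mul_iff_right₀ hq1).mp key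

end

/-- Theorem 2.5 (b): for fixed `q > 1`, the map `x ↦ (a_i)`, the quasi-greedy expansion
of `x` with unbounded digits, is a strictly increasing one-to-one correspondence between
`(0, ∞)` and the set of infinite sequences of nonnegative integers satisfying
`a_{n+1}a_{n+2}… ≤ α_1α_2…` for all `n`, where `(α_i)` is the quasi-greedy expansion of `1`. -/
theorem quasiGreedyU_bijection (q : ℝ) (hq : 1 < q) :
    (∀ x x' : ℝ, 0 < x → x < x' → LexLt (quasiGreedyU q x) (quasiGreedyU q x')) ∧
    Set.BijOn (fun x : ℝ => quasiGreedyU q x) (Set.Ioi 0)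
      {a : ℕ → ℕ | {n | a n ≠ 0}.Infinite ∧
        ∀ n, LexLe (fun i => a (n + 1 + i)) (quasiGreedyU q 1)} := by
  have hq0 : (0:ℝ) < q := lt_trans one_pos hq
  constructor
  · exact fun x x' hx hxx => QGU.lexlt_of_lt hq hx hxx
  refine ⟨?_, ?_, ?_⟩
  · -- MapsTo
    intro x hx
    have hx : 0 < x := hx
    refine ⟨QGU.infinite_nonzero hq hx, fun n => ?_⟩
    refine QGU.lex_le_alpha hq _ ?_ ?_
    · exact QGU.tail_infinite (QGU.infinite_nonzero hq hx) (n+1)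
    · exact fun m => QGU.tail_sum_le_one hq hx n m
  · -- InjOn
    intro x hx x' hx' h
    by_contra hne
    have hx0 : 0 < x := hx
    have hx0' : 0 < x' := hx'
    have h' : quasiGreedyU q x = quasiGreedyU q x' := h
    rcases lt_or_gt_of_ne hne with hlt | hlt
    · obtain ⟨n, _, hn⟩ := QGU.lexlt_of_lt hq hx0 hlt
      rw [h'] at hn
      exact lt_irrefl _ hn
    · obtain ⟨n, _, hn⟩ := QGU.lexlt_of_lt hq hx0' hlt
      rw [← h'] at hn
      exact lt_irrefl _ hn
  · -- SurjOn
    intro a ha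
    obtain ⟨hinf, hlex⟩ := ha
    have htails := QGU.tail_sums hq a hlex
    set S : ℕ → ℝ := fun m => ∑ i ∈ Finset.range m, (a i:ℝ)/q^(i+1) with hS
    have hterm : ∀ i : ℕ, (0:ℝ) ≤ (a i:ℝ)/q^(i+1) :=
      fun i => div_nonneg (Nat.cast_nonneg _) (QGU.qpos hq (i+1)).le
    have hmono : ∀ i j : ℕ, i ≤ j → S i ≤ S j := by
      intro i j hij
      refine Finset.sum_le_sum_of_subset_of_nonneg (Finset.range_subset_range.mpr hij) ?_
      exact fun k _ _ => hterm k
    have hbdd : ∀ m, S m ≤ ((a 0:ℝ)+1)/q := by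
      intro m
      rcases Nat.eq_zero_or_pos m with rfl | hm
      · simp only [hS, Finset.range_zero, Finset.sum_empty]
        positivity
      · obtain ⟨t, rfl⟩ : ∃ t, m = 0+1+t := ⟨m-1, by omega⟩
        show (∑ i ∈ Finset.range (0+1+t), (a i:ℝ)/q^(i+1)) ≤ _
        rw [QGU.sum_split]
        have hT := htails t 0
        have h0 : (0:ℝ) < 1/q^(0+1) := by positivity
        have hmul : (1/q^(0+1)) * (∑ i ∈ Finset.range t, (a (0+1+i):ℝ)/q^(i+1))
            ≤ (1/q^(0+1)) * 1 := mul_le_mul_of_nonneg_left hT h0.le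
        rw [Finset.sum_range_one]
        rw [mul_one] at hmul
        have e : (0:ℕ)+1 = 1 := rfl
        rw [e, pow_one] at hmul ⊢
        rw [add_div]
        linarith
    have hBdd : BddAbove (Set.range S) := ⟨((a 0:ℝ)+1)/q, by rintro _ ⟨m, rfl⟩; exact hbdd m⟩
    have hle : ∀ m, S m ≤ ⨆ k, S k := fun m => le_ciSup hBdd m
    set x := ⨆ k, S k with hx
    have h1 : ∀ n, S n < x := by
      intro n
      obtain ⟨m, hmem, hmlt⟩ := hinf.exists_gt n
      have hnm : S n ≤ S m := hmono n m (by omega)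
      have hstep : S m < S (m+1) := by
        show S m < ∑ i ∈ Finset.range (m+1), (a i:ℝ)/q^(i+1)
        rw [Finset.sum_range_succ]
        have ha1 : (1:ℝ) ≤ (a m:ℝ) := by
          have : a m ≠ 0 := hmem
          exact_mod_cast Nat.one_le_iff_ne_zero.mpr this
        have hp : (0:ℝ) < q^(m+1) := QGU.qpos hq (m+1)
        have : (0:ℝ) < (a m:ℝ)/q^(m+1) := by positivity
        linarith
      exact lt_of_le_of_lt hnm (lt_of_lt_of_le hstep (hle (m+1)))
    have h2 : ∀ n, x ≤ S (n+1) + 1/q^(n+1) := by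
      intro n
      refine ciSup_le fun m => ?_
      have h0 : (0:ℝ) < 1/q^(n+1) := by
        have := QGU.qpos hq (n+1); positivity
      rcases le_or_gt m (n+1) with h | h
      · have := hmono m (n+1) h
        linarith
      · obtain ⟨t, rfl⟩ : ∃ t, m = n+1+t := ⟨m-(n+1), by omega⟩
        show (∑ i ∈ Finset.range (n+1+t), (a i:ℝ)/q^(i+1)) ≤ _
        rw [QGU.sum_split]
        have hT := htails t n
        have hmul : (1/q^(n+1)) * (∑ i ∈ Finset.range t, (a (n+1+i):ℝ)/q^(i+1))
            ≤ (1/q^(n+1)) * 1 := mul_le_mul_of_nonneg_left hT h0.le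
        rw [mul_one] at hmul
        have : S (n+1) = ∑ i ∈ Finset.range (n+1), (a i:ℝ)/q^(i+1) := rfl
        linarith
    have hx0 : 0 < x := by
      have := h1 0
      simpa only [hS, Finset.range_zero, Finset.sum_empty] using this
    refine ⟨x, hx0, ?_⟩
    show quasiGreedyU q x = a
    refine QGU.expansion_eq hq a ?_ ?_
    · exact fun n => h1 n
    · exact fun n => h2 n
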